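/- Let G be a tree and let S be a minimal perfect critical set of G. Let B = {u ∈ V∖S : N_S(u) ≠ ∅ and N_S(u) ≠ S}. Then every vertex v ∈ B has exactly two neighbors in S ∪ B, i.e., every v ∈ B has degree 2 in the simplified graph G̃ = G[S ∪ B]. -/

import Mathlib

open Matrix
open scoped Classical

/-- `S` is a critical set of `G`: `S` is nonempty and there is a nonzero eigenvector of the
Laplacian of `G` vanishing outside `S`. -/
def IsCriticalSet {V : Type*} [Fintype V] [DecidableEq V] (G : SimpleGraph V) (S : Set V) :
    Prop :=
  S.Nonempty ∧ ∃ (lam : ℝ) (y : V → ℝ), y ≠ 0 ∧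
    G.lapMatrix ℝ *ᵥ y = lam • y ∧ ∀ v ∉ S, y v = 0

/-- `S` is a perfect critical set of `G`: some inducing eigenvector vanishes outside `S` and is
nonzero at every vertex of `S`. -/
def IsPerfectCriticalSet {V : Type*} [Fintype V] [DecidableEq V] (G : SimpleGraph V)
    (S : Set V) : Prop :=
  S.Nonempty ∧ ∃ (lam : ℝ) (y : V → ℝ), y ≠ 0 ∧
    G.lapMatrix ℝ *ᵥ y = lam • y ∧ (∀ v ∉ S, y v = 0) ∧ ∀ v ∈ S, y v ≠ 0

/-- `S` is a minimal perfect critical set of `G`: a perfect critical set none of whose proper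
subsets is a perfect critical set. -/
def IsMinimalPerfectCriticalSet {V : Type*} [Fintype V] [DecidableEq V] (G : SimpleGraph V)
    (S : Set V) : Prop :=
  IsPerfectCriticalSet G S ∧ ∀ T : Set V, T ⊂ S → ¬ IsPerfectCriticalSet G T

/-- The graph `G` with vertex `v` isolated (all edges at `v` removed). -/
def delV {V : Type*} (G : SimpleGraph V) (v : V) : SimpleGraph V where
  Adj a b := G.Adj a b ∧ a ≠ v ∧ b ≠ v
  symm := ⟨fun a b h => ⟨h.1.symm, h.2.2, h.2.1⟩⟩
  loopless := ⟨fun a h => G.irrefl h.1⟩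

lemma delV_walk_not_mem {V : Type*} {G : SimpleGraph V} {v a b : V}
    (p : (delV G v).Walk a b) (ha : a ≠ v) : v ∉ p.support := by
  induction p with
  | nil => simpa using ha.symm
  | cons h p ih =>
    rw [SimpleGraph.Walk.support_cons]
    simp only [List.mem_cons, not_or]
    exact ⟨fun hv => ha hv.symm, ih h.2.2⟩

lemma delV_not_reachable {V : Type*} {G : SimpleGraph V} (hG : G.IsTree) {v u1 u2 : V}
    (h1 : G.Adj v u1) (h2 : G.Adj v u2) (hne : u1 ≠ u2) :
    ¬ (delV G v).Reachable u1 u2 := by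
  rintro ⟨p⟩
  have hle : delV G v ≤ G := fun a b h => h.1
  have hv : v ∉ p.support := delV_walk_not_mem p h1.ne'
  have hvq : v ∉ (p.mapLe hle).support := by
    simpa [SimpleGraph.Walk.mapLe, SimpleGraph.Walk.support_map] using hv
  have hvt : v ∉ ((p.mapLe hle).toPath : G.Walk u1 u2).support :=
    fun h => hvq (SimpleGraph.Walk.support_toPath_subset _ h)
  set p2 : G.Walk u1 u2 := .cons h1.symm (.cons h2 .nil) with hp2
  have hp2p : p2.IsPath := by
    rw [SimpleGraph.Walk.isPath_def]
    simp [hp2, h1.ne', h2.ne, hne]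
  have := (hG.existsUnique_path u1 u2).unique
    ((p.mapLe hle).toPath.2 : ((p.mapLe hle).toPath : G.Walk u1 u2).IsPath) hp2p
  rw [this] at hvt
  simp [hp2] at hvt

lemma modified_eigen {V : Type*} [Fintype V] [DecidableEq V] {G : SimpleGraph V}
    {lam : ℝ} {y : V → ℝ} (hy : G.lapMatrix ℝ *ᵥ y = lam • y) {v : V} (hv : y v = 0)
    (c : (delV G v).ConnectedComponent → ℝ)
    (hsum : ∑ x ∈ G.neighborFinset v, c ((delV G v).connectedComponentMk x) * y x = 0) :
    G.lapMatrix ℝ *ᵥ (fun w => c ((delV G v).connectedComponentMk w) * y w)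
      = lam • (fun w => c ((delV G v).connectedComponentMk w) * y w) := by
  funext w
  have heig : (G.degree w : ℝ) * y w - ∑ x ∈ G.neighborFinset w, y x = lam * y w := by
    have := congrFun hy w
    rwa [SimpleGraph.lapMatrix_mulVec_apply] at this
  show (G.lapMatrix ℝ *ᵥ _) w = lam * _
  rw [SimpleGraph.lapMatrix_mulVec_apply]
  by_cases hw : w = v
  · subst hw
    simp [hv, hsum]
  · have hterm : ∀ x ∈ G.neighborFinset w,
        c ((delV G v).connectedComponentMk x) * y x
          = c ((delV G v).connectedComponentMk w) * y x := by
      intro x hx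
      by_cases hxv : x = v
      · subst hxv; simp [hv]
      · have : (delV G v).Adj w x := ⟨(G.mem_neighborFinset w x).mp hx, hw, hxv⟩
        rw [SimpleGraph.ConnectedComponent.sound this.reachable]
    rw [Finset.sum_congr rfl hterm, ← Finset.mul_sum]
    calc (G.degree w : ℝ) * (c ((delV G v).connectedComponentMk w) * y w)
          - c ((delV G v).connectedComponentMk w) * ∑ x ∈ G.neighborFinset w, y x
        = c ((delV G v).connectedComponentMk w)
            * ((G.degree w : ℝ) * y w - ∑ x ∈ G.neighborFinset w, y x) := by ring
      _ = lam * (c ((delV G v).connectedComponentMk w) * y w) := by rw [heig]; ring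

/-- Proposition: if `S` is a minimal perfect critical set of a tree `G` and `B` is the set of
vertices outside `S` whose neighborhood in `S` is neither empty nor all of `S`, then every
vertex of `B` has exactly two neighbors in `S ∪ B`, i.e. degree `2` in the simplified graph. -/
theorem mpcs_of_tree_outside_vertices_degree_two
    {V : Type*} [Fintype V] [DecidableEq V]
    (G : SimpleGraph V) (hG : G.IsTree)
    (S : Set V) (hS : IsMinimalPerfectCriticalSet G S)
    (B : Set V)
    (hB : B = {u : V | u ∉ S ∧ (∃ w ∈ S, G.Adj u w) ∧ ¬ (∀ w ∈ S, G.Adj u w)}) :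
    ∀ v ∈ B, {u ∈ S ∪ B | G.Adj v u}.ncard = 2 := by
  subst hB
  intro v hv
  obtain ⟨⟨hSne, lam, y, hy0, hyeig, hyout, hySnz⟩, hmin⟩ := hS
  obtain ⟨hvS, ⟨s1, hs1S, hs1adj⟩, -⟩ := hv
  have hyv : y v = 0 := hyout v hvS
  have eigv : ∑ x ∈ G.neighborFinset v, y x = 0 := by
    have := congrFun hyeig v
    rw [SimpleGraph.lapMatrix_mulVec_apply] at this
    simpa [hyv] using this
  set K := (delV G v).connectedComponentMk with hK
  have hKne : ∀ a b : V, G.Adj v a → G.Adj v b → a ≠ b → K a ≠ K b := by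
    intro a b ha hb hab h
    exact delV_not_reachable hG ha hb hab (SimpleGraph.ConnectedComponent.exact h)
  have hPCS : ∀ c : (delV G v).ConnectedComponent → ℝ,
      (∑ x ∈ G.neighborFinset v, c (K x) * y x = 0) →
      (∃ w ∈ S, c (K w) * y w ≠ 0) →
      (∃ w ∈ S, c (K w) = 0) → False := by
    rintro c hsum ⟨w0, hw0S, hw0⟩ ⟨w1, hw1S, hw1⟩
    set z : V → ℝ := fun w => c (K w) * y w with hz
    set T : Set V := {w | z w ≠ 0} with hT
    have hTS : T ⊆ S := by
      intro w hw
      by_contra hwS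
      exact hw (by simp [hz, hyout w hwS])
    have hTs : T ⊂ S := ⟨hTS, fun h => (h hw1S : z w1 ≠ 0) (by simp [hz, hw1])⟩
    refine hmin T hTs ⟨⟨w0, (by simpa [hT, hz] using hw0 : w0 ∈ T)⟩, lam, z,
      fun h => hw0 (by simpa [hz] using congrFun h w0),
      modified_eigen hyeig hyv c hsum,
      fun w hw => not_not.mp hw, fun w hw => hw⟩
  have claim1 : ∀ u, G.Adj v u → u ∉ S → ∀ s', s' ∈ S → G.Adj u s' → False := by
    intro u hadj huS s' hs'S hs'adj
    refine hPCS (fun k => if k = K u then 1 else 0) ?_ ⟨s', hs'S, ?_⟩ ⟨s1, hs1S, ?_⟩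
    · apply Finset.sum_eq_zero
      intro x hx
      by_cases hyx : y x = 0
      · simp [hyx]
      · have hxS : x ∈ S := by by_contra h; exact hyx (hyout x h)
        have hxu : x ≠ u := fun h => huS (h ▸ hxS)
        have hne : K x ≠ K u := hKne x u ((G.mem_neighborFinset v x).mp hx) hadj hxu
        simp [hne]
    · have hs'v : s' ≠ v := fun h => hvS (h ▸ hs'S)
      have hadj' : (delV G v).Adj u s' := ⟨hs'adj, hadj.ne', hs'v⟩
      have hKs' : K s' = K u := (SimpleGraph.ConnectedComponent.sound hadj'.reachable).symm
      simp [hKs', hySnz s' hs'S]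
    · have hne : K s1 ≠ K u := hKne s1 u hs1adj hadj (fun h => huS (h ▸ hs1S))
      simp [hne]
  have claim2 : ∀ a b d : V, a ∈ S → b ∈ S → d ∈ S → G.Adj v a → G.Adj v b → G.Adj v d →
      a ≠ b → a ≠ d → b ≠ d → False := by
    intro a b d haS hbS hdS hva hvb hvd hab had hbd
    have hyb : y b ≠ 0 := hySnz b hbS
    refine hPCS (fun k => if k = K a then 1 else if k = K b then -y a / y b else 0) ?_
      ⟨a, haS, ?_⟩ ⟨d, hdS, ?_⟩
    · have hterm : ∀ x ∈ G.neighborFinset v,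
          (if K x = K a then 1 else if K x = K b then -y a / y b else 0) * y x
            = (if x = a then y a else 0) + (if x = b then -y a else 0) := by
        intro x hx
        have hvx := (G.mem_neighborFinset v x).mp hx
        by_cases hxa : x = a
        · subst hxa; simp [hab]
        · have h1 : K x ≠ K a := hKne x a hvx hva hxa
          by_cases hxb : x = b
          · subst hxb
            simp only [h1, if_false, if_pos rfl, if_neg hxa, if_true, zero_add]
            field_simp
          · have h2 : K x ≠ K b := hKne x b hvx hvb hxb
            simp [h1, h2, hxa, hxb]
      rw [Finset.sum_congr rfl hterm, Finset.sum_add_distrib]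
      rw [Finset.sum_ite_eq' (G.neighborFinset v) a (fun _ => y a),
        Finset.sum_ite_eq' (G.neighborFinset v) b (fun _ => -y a)]
      simp [(G.mem_neighborFinset v a).mpr hva, (G.mem_neighborFinset v b).mpr hvb]
    · simp [hySnz a haS]
    · have h1 : K d ≠ K a := hKne d a hvd hva (Ne.symm had)
      have h2 : K d ≠ K b := hKne d b hvd hvb (Ne.symm hbd)
      simp [h1, h2]
  have hs1mem : s1 ∈ G.neighborFinset v := (G.mem_neighborFinset v s1).mpr hs1adj
  obtain ⟨s2, hs2mem, hs2ne, hs2y⟩ : ∃ s2 ∈ G.neighborFinset v, s2 ≠ s1 ∧ y s2 ≠ 0 := by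
    by_contra h
    push_neg at h
    have hsum : ∑ x ∈ G.neighborFinset v, y x = y s1 :=
      Finset.sum_eq_single_of_mem s1 hs1mem (fun x hx hne => h x hx hne)
    exact hySnz s1 hs1S (by rw [← hsum]; exact eigv)
  have hs2S : s2 ∈ S := by by_contra h; exact hs2y (hyout s2 h)
  have hs2adj : G.Adj v s2 := (G.mem_neighborFinset v s2).mp hs2mem
  have hset : {u ∈ S ∪ {u : V | u ∉ S ∧ (∃ w ∈ S, G.Adj u w) ∧ ¬ (∀ w ∈ S, G.Adj u w)} |
      G.Adj v u} = {s1, s2} := by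
    ext u
    simp only [Set.mem_setOf_eq, Set.mem_union, Set.mem_insert_iff, Set.mem_singleton_iff]
    constructor
    · rintro ⟨hu, hadj⟩
      rcases hu with huS | ⟨huS, ⟨w, hwS, hwadj⟩, -⟩
      · by_contra hc
        push_neg at hc
        exact claim2 u s1 s2 huS hs1S hs2S hadj hs1adj hs2adj hc.1 hc.2 (Ne.symm hs2ne)
      · exact absurd (claim1 u hadj huS w hwS hwadj) id
    · rintro (rfl | rfl)
      · exact ⟨Or.inl hs1S, hs1adj⟩
      · exact ⟨Or.inl hs2S, hs2adj⟩
  rw [hset, Set.ncard_pair (Ne.symm hs2ne)]
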